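/- Let f : ℝ² → ℝ², f(x₁,x₂) = (x₁² + x₂², x₁² - x₂²). Then f is proper (hence satisfies the Palais–Smale condition), but f does not satisfy the (RSPS) condition: the sequence x^k = (k, 0) satisfies ν_f(x^k) = 0 and f(x^k) ∈ ℝ²_+ for all k, yet has no convergent subsequence. -/

import Mathlib

open Filter

/-- The Rabier function `ν_f(x) = inf {‖Σ λ_i ∇f_i(x)‖ : Σ |λ_i| = 1}`. -/
noncomputable def rabier {n m : ℕ} (f : EuclideanSpace ℝ (Fin n) → (Fin m → ℝ))
    (x : EuclideanSpace ℝ (Fin n)) : ℝ :=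
  sInf {r : ℝ | ∃ l : Fin m → ℝ, (∑ i, |l i|) = 1 ∧
    r = ‖∑ i, l i • gradient (fun y => f y i) x‖}

open InnerProductSpace in
lemma stmt17_grad (x : EuclideanSpace ℝ (Fin 2)) (s : ℝ) (hx1 : x 1 = 0) :
    HasGradientAt (fun y : EuclideanSpace ℝ (Fin 2) => (y 0)^2 + s * (y 1)^2)
      ((2:ℝ) • x) x := by
  rw [hasGradientAt_iff_hasFDerivAt]
  have h0 : HasFDerivAt (fun y : EuclideanSpace ℝ (Fin 2) => y 0)
      (EuclideanSpace.proj (0 : Fin 2) : EuclideanSpace ℝ (Fin 2) →L[ℝ] ℝ) x := by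
    simpa using (EuclideanSpace.proj (0 : Fin 2) :
      EuclideanSpace ℝ (Fin 2) →L[ℝ] ℝ).hasFDerivAt (x := x)
  have h1 : HasFDerivAt (fun y : EuclideanSpace ℝ (Fin 2) => y 1)
      (EuclideanSpace.proj (1 : Fin 2) : EuclideanSpace ℝ (Fin 2) →L[ℝ] ℝ) x := by
    simpa using (EuclideanSpace.proj (1 : Fin 2) :
      EuclideanSpace ℝ (Fin 2) →L[ℝ] ℝ).hasFDerivAt (x := x)
  have := (h0.mul h0).add ((h1.mul h1).const_mul s)
  simp only [pow_two]
  refine this.congr_fderiv ?_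
  ext z
  simp [toDual, PiLp.inner_apply, Fin.sum_univ_two, PiLp.smul_apply, hx1]
  ring

theorem stmt_17 (f : EuclideanSpace ℝ (Fin 2) → (Fin 2 → ℝ))
    (hf : ∀ x, f x = ![(x 0) ^ 2 + (x 1) ^ 2, (x 0) ^ 2 - (x 1) ^ 2])
    (x : ℕ → EuclideanSpace ℝ (Fin 2))
    (hx : ∀ k i, x k i = if i = 0 then (k : ℝ) else 0) :
    (∀ A : Set (Fin 2 → ℝ), IsCompact A → IsCompact (f ⁻¹' A)) ∧
      (∀ k, rabier f (x k) = 0) ∧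
      (∀ k, (0 : Fin 2 → ℝ) ≤ f (x k)) ∧
      (∀ φ : ℕ → ℕ, StrictMono φ →
        ¬ ∃ y : EuclideanSpace ℝ (Fin 2),
            Tendsto (fun j => x (φ j)) atTop (nhds y)) := by
  -- continuity of f
  have hcont : Continuous f := by
    have : f = fun y => ![(y 0) ^ 2 + (y 1) ^ 2, (y 0) ^ 2 - (y 1) ^ 2] := funext hf
    rw [this]
    refine continuous_pi fun i => ?_
    have c0 : Continuous fun y : EuclideanSpace ℝ (Fin 2) => y 0 :=
      (EuclideanSpace.proj (0 : Fin 2)).continuous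
    have c1 : Continuous fun y : EuclideanSpace ℝ (Fin 2) => y 1 :=
      (EuclideanSpace.proj (1 : Fin 2)).continuous
    fin_cases i <;> simp <;> fun_prop
  refine ⟨?_, ?_, ?_, ?_⟩
  · -- properness
    intro A hA
    have hclosed : IsClosed (f ⁻¹' A) := hA.isClosed.preimage hcont
    obtain ⟨C, hC⟩ := hA.isBounded.exists_norm_le
    refine Metric.isCompact_of_isClosed_isBounded hclosed ?_
    rw [Metric.isBounded_iff_subset_closedBall 0]
    refine ⟨Real.sqrt C, fun y hy => ?_⟩
    have hfy := hC _ hy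
    have h0 : f y 0 ≤ C := by
      calc f y 0 ≤ |f y 0| := le_abs_self _
        _ = ‖f y 0‖ := rfl
        _ ≤ ‖f y‖ := norm_le_pi_norm _ 0
        _ ≤ C := hfy
    have hnorm : ‖y‖^2 ≤ C := by
      calc ‖y‖^2 = (y 0)^2 + (y 1)^2 := by
            rw [EuclideanSpace.norm_eq, Real.sq_sqrt (by positivity)]
            simp [Fin.sum_univ_two, sq_abs]
        _ = f y 0 := by rw [hf]; simp
        _ ≤ C := h0
    simp only [Metric.mem_closedBall, dist_zero_right]
    have : (0:ℝ) ≤ C := le_trans (by positivity) hnorm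
    calc ‖y‖ = Real.sqrt (‖y‖^2) := (Real.sqrt_sq (norm_nonneg y)).symm
      _ ≤ Real.sqrt C := Real.sqrt_le_sqrt hnorm
  · -- rabier = 0
    intro k
    have hx1 : x k 1 = 0 := by simp [hx]
    have hgr : ∀ i : Fin 2, gradient (fun y => f y i) (x k) = (2:ℝ) • x k := by
      intro i
      fin_cases i
      · show gradient (fun y => f y 0) (x k) = (2:ℝ) • x k
        have he : (fun y => f y 0) =
            fun y : EuclideanSpace ℝ (Fin 2) => (y 0)^2 + (1:ℝ) * (y 1)^2 := by
          funext y; rw [hf]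
          simp only [Matrix.cons_val_zero]; ring
        rw [he]
        exact (stmt17_grad (x k) 1 hx1).gradient
      · show gradient (fun y => f y 1) (x k) = (2:ℝ) • x k
        have he : (fun y => f y 1) =
            fun y : EuclideanSpace ℝ (Fin 2) => (y 0)^2 + (-1:ℝ) * (y 1)^2 := by
          funext y; rw [hf]
          simp only [Matrix.cons_val_one, Matrix.head_cons, Matrix.cons_val_zero]; ring
        rw [he]
        exact (stmt17_grad (x k) (-1) hx1).gradient
    have hmem : (0:ℝ) ∈ {r : ℝ | ∃ l : Fin 2 → ℝ, (∑ i, |l i|) = 1 ∧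
        r = ‖∑ i, l i • gradient (fun y => f y i) (x k)‖} := by
      refine ⟨![1/2, -1/2], ?_, ?_⟩
      · rw [Fin.sum_univ_two]
        simp only [Matrix.cons_val_zero, Matrix.cons_val_one, Matrix.head_cons]
        rw [abs_of_pos (by norm_num : (0:ℝ) < 1/2), abs_of_neg (by norm_num : (-1/2:ℝ) < 0)]
        norm_num
      · rw [Fin.sum_univ_two, hgr 0, hgr 1]
        simp only [Matrix.cons_val_zero, Matrix.cons_val_one, Matrix.head_cons, smul_smul]
        rw [← add_smul]
        norm_num
    refine le_antisymm (csInf_le ⟨0, fun r hr => ?_⟩ hmem) (le_csInf ⟨0, hmem⟩ fun r hr => ?_)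
    · obtain ⟨l, _, hl⟩ := hr; rw [hl]; positivity
    · obtain ⟨l, _, hl⟩ := hr; rw [hl]; positivity
  · -- nonnegativity
    intro k i
    rw [hf]
    have h0 : x k 0 = (k:ℝ) := by simp [hx]
    have h1 : x k 1 = 0 := by simp [hx]
    fin_cases i <;> simp [h0, h1] <;> positivity
  · -- no convergent subsequence
    rintro φ hφ ⟨y, hy⟩
    have hcont0 : Continuous fun z : EuclideanSpace ℝ (Fin 2) => z 0 :=
      (EuclideanSpace.proj (0 : Fin 2)).continuous
    have h1 : Tendsto (fun j => x (φ j) 0) atTop (nhds (y 0)) :=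
      (hcont0.tendsto y).comp hy
    have h2 : Tendsto (fun j => x (φ j) 0) atTop atTop := by
      have : (fun j => x (φ j) 0) = fun j => ((φ j : ℕ) : ℝ) := by
        funext j; simp [hx]
      rw [this]
      exact tendsto_natCast_atTop_atTop.comp hφ.tendsto_atTop
    exact not_tendsto_nhds_of_tendsto_atTop h2 _ h1
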